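/- Let p ≥ 7 be a prime, n ≥ 2, G a profinite group, ρ : G → GL_n(ℤ_p) a continuous group homomorphism, and m ≥ 1. Let μ ∈ M_n(𝔽_p) be the diagonal matrix whose (i,i)-entry (for 1 ≤ i ≤ n) equals 1 if i is even and 0 if i is odd. Suppose that Φ_m(ρ) contains μ, and contains e_{i,j} for every pair (i,j) with i ≠ j and i + j odd, where e_{i,j} is the matrix with (i,j)-entry 1 and all other entries 0. Then: (1) Φ_{4m}(ρ) contains every trace-zero matrix in M_n(𝔽_p); and (2) the image of ρ contains U_{4m}. -/

import Mathlib

open Matrix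
section Aux
variable {p : ℕ} [Fact p.Prime] {n : ℕ} {G : Type*} [Group G]
  (ρ : G →* Matrix.GeneralLinearGroup (Fin n) ℤ_[p])

noncomputable def rd : Matrix (Fin n) (Fin n) ℤ_[p] →+* Matrix (Fin n) (Fin n) (ZMod p) :=
  (PadicInt.toZMod (p := p)).mapMatrix

lemma rd_psmul {j : ℕ} (hj : 1 ≤ j) (B : Matrix (Fin n) (Fin n) ℤ_[p]) :
    rd (((p : ℤ_[p]) ^ j) • B) = 0 := by
  ext i k
  simp only [rd, RingHom.mapMatrix_apply, Matrix.map_apply, Matrix.smul_apply, smul_eq_mul,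
    _root_.map_mul, map_pow, Matrix.zero_apply, map_natCast, ZMod.natCast_self,
    zero_pow (by omega : j ≠ 0), zero_mul]

def Sset (j : ℕ) : Set (Matrix (Fin n) (Fin n) ℤ_[p]) :=
  {B | ∃ g : G, (ρ g).val = 1 + ((p : ℤ_[p]) ^ j) • B}

def Sd (j : ℕ) : Set (Matrix (Fin n) (Fin n) ℤ_[p]) :=
  {B | ∃ g : G, ((ρ g).val).det = 1 ∧ (ρ g).val = 1 + ((p : ℤ_[p]) ^ j) • B}

lemma Sd_subset_Sset (j : ℕ) : Sd ρ j ⊆ Sset ρ j := fun _ h => h.elim fun g hg => ⟨g, hg.2⟩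

lemma rd_eq_one_of_shape {j : ℕ} (hj : 1 ≤ j) {B : Matrix (Fin n) (Fin n) ℤ_[p]}
    {X : Matrix (Fin n) (Fin n) ℤ_[p]} (h : X = 1 + ((p : ℤ_[p]) ^ j) • B) :
    rd X = 1 := by
  rw [h, map_add, _root_.map_one, rd_psmul hj, add_zero]

lemma bracket_mem {i j : ℕ} (hi : 1 ≤ i) (hj : 1 ≤ j)
    {B1 B2 : Matrix (Fin n) (Fin n) ℤ_[p]}
    (h1 : B1 ∈ Sset ρ i) (h2 : B2 ∈ Sset ρ j) :
    ∃ B ∈ Sd ρ (i + j), rd B = rd B1 * rd B2 - rd B2 * rd B1 := by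
  obtain ⟨g1, hg1⟩ := h1
  obtain ⟨g2, hg2⟩ := h2
  set x : Matrix (Fin n) (Fin n) ℤ_[p] := (ρ g1).val with hx
  set y : Matrix (Fin n) (Fin n) ℤ_[p] := (ρ g2).val with hy
  set x' : Matrix (Fin n) (Fin n) ℤ_[p] := ((ρ g1)⁻¹).val with hx'
  set y' : Matrix (Fin n) (Fin n) ℤ_[p] := ((ρ g2)⁻¹).val with hy'
  have hxx' : x * x' = 1 := by rw [hx, hx', ← Units.val_mul, mul_inv_cancel, Units.val_one]
  have hyy' : y * y' = 1 := by rw [hy, hy', ← Units.val_mul, mul_inv_cancel, Units.val_one]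
  have key : x * y - y * x = ((p : ℤ_[p]) ^ (i + j)) • (B1 * B2 - B2 * B1) := by
    rw [hg1, hg2, pow_add]
    simp only [add_mul, mul_add, one_mul, mul_one, smul_mul_smul_comm]
    module
  have hprod : (ρ (g1 * g2 * g1⁻¹ * g2⁻¹)).val = x * y * (x' * y') := by
    simp only [_root_.map_mul, _root_.map_inv, Units.val_mul, hx, hy, hx', hy', mul_assoc]
  have hcore : y * x * (x' * y') = 1 := by
    calc y * x * (x' * y') = y * (x * x') * y' := by noncomm_ring
    _ = 1 := by rw [hxx', mul_one, hyy']
  have hval : (ρ (g1 * g2 * g1⁻¹ * g2⁻¹)).val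
      = 1 + ((p : ℤ_[p]) ^ (i + j)) • ((B1 * B2 - B2 * B1) * (x' * y')) := by
    rw [hprod]
    have : x * y = y * x + ((p : ℤ_[p]) ^ (i + j)) • (B1 * B2 - B2 * B1) := by
      rw [← key]; abel
    rw [this, add_mul, hcore, smul_mul_assoc]
  have hdet : ((ρ (g1 * g2 * g1⁻¹ * g2⁻¹)).val).det = 1 := by
    rw [hprod]
    have e1 : x.det * x'.det = 1 := by rw [← det_mul, hxx', det_one]
    have e2 : y.det * y'.det = 1 := by rw [← det_mul, hyy', det_one]
    rw [det_mul, det_mul, det_mul]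
    calc x.det * y.det * (x'.det * y'.det) = (x.det * x'.det) * (y.det * y'.det) := by ring
    _ = 1 := by rw [e1, e2, one_mul]
  refine ⟨(B1 * B2 - B2 * B1) * (x' * y'), ⟨g1 * g2 * g1⁻¹ * g2⁻¹, hdet, hval⟩, ?_⟩
  have hrx : rd x = 1 := rd_eq_one_of_shape hi hg1
  have hry : rd y = 1 := rd_eq_one_of_shape hj hg2
  have hrx' : rd x' = 1 := by
    have := congrArg (rd (p := p)) hxx'
    rw [_root_.map_mul, _root_.map_one, hrx, one_mul] at this; exact this
  have hry' : rd y' = 1 := by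
    have := congrArg (rd (p := p)) hyy'
    rw [_root_.map_mul, _root_.map_one, hry, one_mul] at this; exact this
  rw [_root_.map_mul, _root_.map_mul, map_sub, _root_.map_mul, _root_.map_mul,
    hrx', hry', one_mul, mul_one]
lemma zero_mem_Sd (j : ℕ) : (0 : Matrix (Fin n) (Fin n) ℤ_[p]) ∈ Sd ρ j :=
  ⟨1, by simp, by simp⟩

lemma mul_mem_Sd {j : ℕ} {B1 B2 : Matrix (Fin n) (Fin n) ℤ_[p]}
    (h1 : B1 ∈ Sd ρ j) (h2 : B2 ∈ Sd ρ j) :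
    B1 + B2 + ((p : ℤ_[p]) ^ j) • (B1 * B2) ∈ Sd ρ j := by
  obtain ⟨g1, hd1, hg1⟩ := h1
  obtain ⟨g2, hd2, hg2⟩ := h2
  refine ⟨g1 * g2, ?_, ?_⟩
  · rw [_root_.map_mul, Units.val_mul, det_mul, hd1, hd2, one_mul]
  · rw [_root_.map_mul, Units.val_mul, hg1, hg2]
    rw [add_mul, one_mul, mul_add, mul_one, smul_mul_smul_comm]
    module

/-- the image of `Sd j` under reduction, as a `ZMod p`-submodule. -/
noncomputable def Tsub (j : ℕ) (hj : 1 ≤ j) : Submodule (ZMod p) (Matrix (Fin n) (Fin n) (ZMod p)) where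
  carrier := {A | ∃ B ∈ Sd ρ j, rd B = A}
  zero_mem' := ⟨0, zero_mem_Sd ρ j, map_zero _⟩
  add_mem' := by
    rintro A1 A2 ⟨B1, hB1, rfl⟩ ⟨B2, hB2, rfl⟩
    refine ⟨B1 + B2 + ((p : ℤ_[p]) ^ j) • (B1 * B2), mul_mem_Sd ρ hB1 hB2, ?_⟩
    rw [map_add, map_add, rd_psmul hj, add_zero]
  smul_mem' := by
    have hns : ∀ (k : ℕ) (A : Matrix (Fin n) (Fin n) (ZMod p)),
        (∃ B ∈ Sd ρ j, rd B = A) → ∃ B ∈ Sd ρ j, rd B = k • A := by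
      intro k
      induction k with
      | zero => exact fun A _ => ⟨0, zero_mem_Sd ρ j, by simp⟩
      | succ k ih =>
        rintro A hA
        obtain ⟨B1, hB1, hB1r⟩ := ih A hA
        obtain ⟨B2, hB2, hB2r⟩ := hA
        refine ⟨B1 + B2 + ((p : ℤ_[p]) ^ j) • (B1 * B2), mul_mem_Sd ρ hB1 hB2, ?_⟩
        rw [map_add, map_add, rd_psmul hj, add_zero, hB1r, hB2r, succ_nsmul]
    rintro c A ⟨B, hB, rfl⟩
    haveI : NeZero p := ⟨(Fact.out : p.Prime).ne_zero⟩
    have : c • rd B = (c.val : ZMod p) • rd B := by rw [ZMod.natCast_rightInverse c]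
    rw [this, Nat.cast_smul_eq_nsmul]
    exact hns c.val (rd B) ⟨B, hB, rfl⟩
/-- diagonal parity matrix -/
noncomputable def mumat (p n : ℕ) [Fact p.Prime] : Matrix (Fin n) (Fin n) (ZMod p) :=
  Matrix.diagonal (fun i : Fin n => if Even ((i : ℕ) + 1) then (1 : ZMod p) else 0)

noncomputable def dfun (p n : ℕ) [Fact p.Prime] (i : Fin n) : ZMod p :=
  if Even ((i : ℕ) + 1) then (1 : ZMod p) else 0

lemma mumat_eq : mumat p n = Matrix.diagonal (dfun p n) := rfl

lemma mu_bracket (a b : Fin n) :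
    mumat p n * single a b (1 : ZMod p)
      - single a b (1 : ZMod p) * mumat p n
    = (dfun p n a - dfun p n b) • single a b (1 : ZMod p) := by
  ext r s
  simp only [mumat_eq, Matrix.sub_apply, Matrix.smul_apply, Matrix.diagonal_mul,
    Matrix.mul_diagonal, smul_eq_mul]
  by_cases h : a = r ∧ b = s
  · obtain ⟨rfl, rfl⟩ := h
    simp [Matrix.single_apply_same]
  · rw [Matrix.single_apply_of_ne _ _ _ _ _ h]; ring

lemma eps_sq {a b : Fin n} (hodd : Odd (((a : ℕ) + 1) + ((b : ℕ) + 1))) :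
    (dfun p n a - dfun p n b) * (dfun p n a - dfun p n b) = 1 := by
  rcases Nat.even_or_odd ((a : ℕ) + 1) with h | h
  · have hb : Odd ((b : ℕ) + 1) := by
      rcases Nat.even_or_odd ((b : ℕ) + 1) with h' | h'
      · exact absurd (h.add h') (by simpa using hodd)
      · exact h'
    simp only [dfun, if_pos h, if_neg (Nat.not_even_iff_odd.mpr hb)]
    ring
  · have hb : Even ((b : ℕ) + 1) := by
      rcases Nat.even_or_odd ((b : ℕ) + 1) with h' | h'
      · exact h'
      · exact absurd (h.add_odd h') (by simpa using hodd)
    simp only [dfun, if_neg (Nat.not_even_iff_odd.mpr h), if_pos hb]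
    ring

end Aux
section Part1
variable {p : ℕ} [Fact p.Prime] {n : ℕ} {G : Type*} [Group G]
  {ρ : G →* Matrix.GeneralLinearGroup (Fin n) ℤ_[p]} {m : ℕ}

lemma ne_of_oddsum {a b : Fin n} (h : Odd (((a : ℕ) + 1) + ((b : ℕ) + 1))) : a ≠ b := by
  rintro rfl
  rw [Nat.odd_iff] at h; omega

lemma stdE (hm : 1 ≤ m)
    (hμS : ∃ B ∈ Sset ρ m, rd B = mumat p n)
    (heS : ∀ a b : Fin n, a ≠ b → Odd (((a : ℕ) + 1) + ((b : ℕ) + 1)) →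
      ∃ B ∈ Sset ρ m, rd B = single a b (1 : ZMod p)) :
    ∀ k, 2 ≤ k → ∀ a b : Fin n, Odd (((a : ℕ) + 1) + ((b : ℕ) + 1)) →
      ∃ B ∈ Sd ρ (k * m), rd B = single a b (1 : ZMod p) := by
  intro k hk
  induction k, hk using Nat.le_induction with
  | base =>
    intro a b hodd
    obtain ⟨Bμ, hBμ, hBμr⟩ := hμS
    obtain ⟨Be, hBe, hBer⟩ := heS a b (ne_of_oddsum hodd) hodd
    obtain ⟨B, hBSd, hBr⟩ := bracket_mem ρ hm hm hBμ hBe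
    rw [hBμr, hBer, mu_bracket] at hBr
    have h1 : 1 ≤ 2 * m := by omega
    have hmem : (dfun p n a - dfun p n b) • single a b (1 : ZMod p)
        ∈ Tsub ρ (2 * m) h1 := ⟨B, by rwa [two_mul], hBr⟩
    have := Submodule.smul_mem (Tsub ρ (2 * m) h1) (dfun p n a - dfun p n b) hmem
    rw [smul_smul, eps_sq hodd, one_smul] at this
    exact this
  | succ k hk ih =>
    intro a b hodd
    obtain ⟨X, hXSd, hXr⟩ := ih a b hodd
    obtain ⟨Bμ, hBμ, hBμr⟩ := hμS
    obtain ⟨B, hBSd, hBr⟩ := bracket_mem ρ hm (by exact Nat.mul_pos (by omega) hm) hBμ (Sd_subset_Sset ρ _ hXSd)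
    rw [hBμr, hXr, mu_bracket] at hBr
    have h1 : 1 ≤ (k + 1) * m := by exact Nat.mul_pos (by omega) hm
    have heq : m + k * m = (k + 1) * m := by ring
    rw [heq] at hBSd
    have hmem : (dfun p n a - dfun p n b) • single a b (1 : ZMod p)
        ∈ Tsub ρ ((k + 1) * m) h1 := ⟨B, hBSd, hBr⟩
    have := Submodule.smul_mem (Tsub ρ ((k + 1) * m) h1) (dfun p n a - dfun p n b) hmem
    rw [smul_smul, eps_sq hodd, one_smul] at this
    exact this

/-- an index of opposite parity to `a`, among `0` and `1` -/
def oppc (hn : 2 ≤ n) (a : Fin n) : Fin n :=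
  if Even ((a : ℕ) + 1) then ⟨0, by omega⟩ else ⟨1, by omega⟩

lemma oppc_odd (hn : 2 ≤ n) (a : Fin n) :
    Odd (((a : ℕ) + 1) + (((oppc hn a : Fin n) : ℕ) + 1)) := by
  unfold oppc
  split
  · next h => simpa using h.add_one
  · next h =>
    have : Odd ((a : ℕ) + 1) := Nat.odd_iff.mpr (by rw [Nat.even_iff] at h; omega)
    simpa using this.add_even (by norm_num)

lemma offdiagE (hn : 2 ≤ n) (hm : 1 ≤ m)
    (hμS : ∃ B ∈ Sset ρ m, rd B = mumat p n)
    (heS : ∀ a b : Fin n, a ≠ b → Odd (((a : ℕ) + 1) + ((b : ℕ) + 1)) →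
      ∃ B ∈ Sset ρ m, rd B = single a b (1 : ZMod p))
    (a b : Fin n) (hab : a ≠ b) :
    ∃ B ∈ Sd ρ (4 * m), rd B = single a b (1 : ZMod p) := by
  rcases Nat.even_or_odd (((a : ℕ) + 1) + ((b : ℕ) + 1)) with hev | hodd
  · set c := oppc hn a with hc
    have hac : Odd (((a : ℕ) + 1) + ((c : ℕ) + 1)) := oppc_odd hn a
    have hcb : Odd (((c : ℕ) + 1) + ((b : ℕ) + 1)) := by
      rw [Nat.odd_iff] at hac ⊢; rw [Nat.even_iff] at hev; omega
    have hcbne : c ≠ b := ne_of_oddsum hcb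
    have hacne : a ≠ c := ne_of_oddsum hac
    obtain ⟨Be, hBe, hBer⟩ := heS a c hacne hac
    obtain ⟨X, hXSd, hXr⟩ := stdE hm hμS heS 3 (by norm_num) c b hcb
    obtain ⟨B, hBSd, hBr⟩ := bracket_mem ρ hm (by exact Nat.mul_pos (by omega) hm) hBe (Sd_subset_Sset ρ _ hXSd)
    have heq : m + 3 * m = 4 * m := by ring
    rw [heq] at hBSd
    refine ⟨B, hBSd, ?_⟩
    rw [hBr, hBer, hXr, Matrix.single_mul_single_same,
      Matrix.single_mul_single_of_ne 1 c b a (Ne.symm hab) 1, one_mul, sub_zero]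
  · obtain ⟨X, hXSd, hXr⟩ := stdE hm hμS heS 4 (by norm_num) a b hodd
    exact ⟨X, hXSd, hXr⟩

lemma diagE (hn : 2 ≤ n) (hm : 1 ≤ m)
    (hμS : ∃ B ∈ Sset ρ m, rd B = mumat p n)
    (heS : ∀ a b : Fin n, a ≠ b → Odd (((a : ℕ) + 1) + ((b : ℕ) + 1)) →
      ∃ B ∈ Sset ρ m, rd B = single a b (1 : ZMod p))
    (a b : Fin n) (hodd : Odd (((a : ℕ) + 1) + ((b : ℕ) + 1))) :
    ∃ B ∈ Sd ρ (4 * m), rd B =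
      single a a (1 : ZMod p) - single b b (1 : ZMod p) := by
  have hab : a ≠ b := ne_of_oddsum hodd
  have hba : Odd (((b : ℕ) + 1) + ((a : ℕ) + 1)) := by rwa [add_comm] at hodd
  obtain ⟨Be, hBe, hBer⟩ := heS a b hab hodd
  obtain ⟨X, hXSd, hXr⟩ := stdE hm hμS heS 3 (by norm_num) b a hba
  obtain ⟨B, hBSd, hBr⟩ := bracket_mem ρ hm (by exact Nat.mul_pos (by omega) hm) hBe (Sd_subset_Sset ρ _ hXSd)
  have heq : m + 3 * m = 4 * m := by ring
  rw [heq] at hBSd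
  refine ⟨B, hBSd, ?_⟩
  rw [hBr, hBer, hXr, Matrix.single_mul_single_same, Matrix.single_mul_single_same, one_mul]

lemma diag_mem (hn : 2 ≤ n) (hm : 1 ≤ m)
    (hμS : ∃ B ∈ Sset ρ m, rd B = mumat p n)
    (heS : ∀ a b : Fin n, a ≠ b → Odd (((a : ℕ) + 1) + ((b : ℕ) + 1)) →
      ∃ B ∈ Sset ρ m, rd B = single a b (1 : ZMod p))
    (a b : Fin n) :
    single a a (1 : ZMod p) - single b b (1 : ZMod p)
      ∈ Tsub ρ (4 * m) (by omega) := by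
  rcases eq_or_ne a b with rfl | hab
  · simpa using Submodule.zero_mem _
  rcases Nat.even_or_odd (((a : ℕ) + 1) + ((b : ℕ) + 1)) with hev | hodd
  · set c := oppc hn a with hc
    have hac : Odd (((a : ℕ) + 1) + ((c : ℕ) + 1)) := oppc_odd hn a
    have hcb : Odd (((c : ℕ) + 1) + ((b : ℕ) + 1)) := by
      rw [Nat.odd_iff] at hac ⊢; rw [Nat.even_iff] at hev; omega
    obtain ⟨B1, hB1, hB1r⟩ := diagE hn hm hμS heS a c hac
    obtain ⟨B2, hB2, hB2r⟩ := diagE hn hm hμS heS c b hcb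
    have h1 : single a a (1 : ZMod p) - single c c 1
        ∈ Tsub ρ (4 * m) (by omega) := ⟨B1, hB1, hB1r⟩
    have h2 : single c c (1 : ZMod p) - single b b 1
        ∈ Tsub ρ (4 * m) (by omega) := ⟨B2, hB2, hB2r⟩
    have := Submodule.add_mem _ h1 h2
    simpa using this
  · exact ⟨_, (diagE hn hm hμS heS a b hodd).choose_spec.1,
      (diagE hn hm hμS heS a b hodd).choose_spec.2⟩
end Part1
section Part1b
variable {p : ℕ} [Fact p.Prime] {n : ℕ} {G : Type*} [Group G]
  {ρ : G →* Matrix.GeneralLinearGroup (Fin n) ℤ_[p]} {m : ℕ}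

lemma mem_Tsub {j : ℕ} {hj : 1 ≤ j} {A : Matrix (Fin n) (Fin n) (ZMod p)} :
    A ∈ Tsub ρ j hj ↔ ∃ B ∈ Sd ρ j, rd B = A := Iff.rfl

lemma tracezero_mem (hn : 2 ≤ n) (hm : 1 ≤ m)
    (hμS : ∃ B ∈ Sset ρ m, rd B = mumat p n)
    (heS : ∀ a b : Fin n, a ≠ b → Odd (((a : ℕ) + 1) + ((b : ℕ) + 1)) →
      ∃ B ∈ Sset ρ m, rd B = single a b (1 : ZMod p))
    (A : Matrix (Fin n) (Fin n) (ZMod p)) (hA : A.trace = 0) :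
    A ∈ Tsub ρ (4 * m) (by omega) := by
  have hnz : 0 < n := by omega
  set z : Fin n := ⟨0, hnz⟩ with hz
  have h1 : ∑ i : Fin n, ∑ j : Fin n, A i j • single i j (1 : ZMod p) = A := by
    conv_rhs => rw [matrix_eq_sum_single A]
    refine Finset.sum_congr rfl fun i _ => Finset.sum_congr rfl fun j _ => ?_
    rw [smul_single, smul_eq_mul, mul_one]
  have h2 : ∑ i : Fin n, ∑ j : Fin n,
      A i j • (if i = j then single z z (1 : ZMod p) else 0) = 0 := by
    have : ∀ i : Fin n, ∑ j : Fin n,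
        A i j • (if i = j then single z z (1 : ZMod p) else 0)
        = A i i • single z z (1 : ZMod p) := by
      intro i
      rw [Finset.sum_eq_single i]
      · simp
      · intro b _ hb; simp [Ne.symm hb]
      · intro h; exact absurd (Finset.mem_univ i) h
    rw [Finset.sum_congr rfl fun i _ => this i, ← Finset.sum_smul]
    have : ∑ i : Fin n, A i i = A.trace := rfl
    rw [this, hA, zero_smul]
  have hrep : A = ∑ i : Fin n, ∑ j : Fin n,
      A i j • (single i j (1 : ZMod p)
        - if i = j then single z z (1 : ZMod p) else 0) := by
    simp only [smul_sub]
    rw [Finset.sum_congr rfl fun i _ => Finset.sum_sub_distrib _ _, Finset.sum_sub_distrib, h1, h2,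
      sub_zero]
  rw [hrep]
  refine Submodule.sum_mem _ fun i _ => Submodule.sum_mem _ fun j _ => Submodule.smul_mem _ _ ?_
  by_cases hij : i = j
  · subst hij
    simp only [if_pos rfl]
    exact diag_mem hn hm hμS heS i z
  · simp only [if_neg hij, sub_zero]
    obtain ⟨B, hB, hr⟩ := offdiagE hn hm hμS heS i j hij
    exact ⟨B, hB, hr⟩
end Part1b
section Part2a
variable {p : ℕ} [Fact p.Prime] {n : ℕ} {G : Type*} [Group G]
  {ρ : G →* Matrix.GeneralLinearGroup (Fin n) ℤ_[p]}

lemma pow_raise (hp7 : 7 ≤ p) {j : ℕ} (hj : 2 ≤ j) {B : Matrix (Fin n) (Fin n) ℤ_[p]}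
    (hB : B ∈ Sd ρ j) : ∃ B' ∈ Sd ρ (j + 1), rd B' = rd B := by
  obtain ⟨g, hdet, hg⟩ := hB
  have hp : p.Prime := Fact.out
  set x : Matrix (Fin n) (Fin n) ℤ_[p] := ((p : ℤ_[p]) ^ j) • B with hx
  have hval : ((ρ (g ^ p)).val) = (x + 1) ^ p := by
    rw [map_pow, Units.val_pow_eq_pow_val, hg, add_comm]
  set f : ℕ → Matrix (Fin n) (Fin n) ℤ_[p] :=
    fun k => ((p : ℤ_[p]) ^ (j * k)) • (B ^ k * (p.choose k : Matrix (Fin n) (Fin n) ℤ_[p]))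
    with hf
  have hexp : (x + 1) ^ p = ∑ k ∈ Finset.range (p + 1), f k := by
    rw [(Commute.one_right x).add_pow p]
    refine Finset.sum_congr rfl fun k _ => ?_
    rw [hf, hx, one_pow, mul_one, smul_pow, ← pow_mul, smul_mul_assoc]
  -- tail divisibility
  have hdvd : ∀ k ∈ Finset.Ico 2 (p + 1), ∃ t : ℕ, p.choose k * p ^ (j * k) = p ^ (j + 2) * t := by
    intro k hk
    rw [Finset.mem_Ico] at hk
    obtain ⟨hk2, hkp⟩ := hk
    rcases eq_or_lt_of_le (by omega : k ≤ p) with heq | hlt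
    · have hle : j + 2 ≤ j * p := by
        calc j + 2 ≤ j * 2 := by omega
        _ ≤ j * p := Nat.mul_le_mul_left j (by omega)
      obtain ⟨q, hq⟩ := pow_dvd_pow p hle
      exact ⟨q, by rw [heq, Nat.choose_self, one_mul, hq]⟩
    · obtain ⟨c, hc⟩ := hp.dvd_choose_self (by omega) hlt
      have hle : j + 1 ≤ j * k := by
        calc j + 1 ≤ j * 2 := by omega
        _ ≤ j * k := Nat.mul_le_mul_left j hk2
      obtain ⟨q, hq⟩ := pow_dvd_pow p hle
      refine ⟨c * q, ?_⟩
      rw [hc, hq, pow_succ, pow_add]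
      ring
  choose t ht using hdvd
  have htail : ∑ k ∈ Finset.Ico 2 (p + 1), f k
      = ((p : ℤ_[p]) ^ (j + 2)) • ∑ k ∈ (Finset.Ico 2 (p + 1)).attach,
          ((t k.1 k.2 : ℤ_[p]) • B ^ (k.1 : ℕ)) := by
    rw [Finset.smul_sum, ← Finset.sum_attach (Finset.Ico 2 (p + 1)) f]
    refine Finset.sum_congr rfl fun k _ => ?_
    simp only [hf]
    have : B ^ (k.1 : ℕ) * (p.choose k.1 : Matrix (Fin n) (Fin n) ℤ_[p])
        = ((p.choose k.1 : ℤ_[p])) • B ^ (k.1 : ℕ) := by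
      rw [← nsmul_eq_mul', ← Nat.cast_smul_eq_nsmul (ℤ_[p])]
    rw [this]
    simp only [smul_smul]
    congr 1
    have hcast := congrArg (fun x : ℕ => (x : ℤ_[p])) (ht k.1 k.2)
    push_cast at hcast
    linear_combination hcast
  set D : Matrix (Fin n) (Fin n) ℤ_[p] :=
    ∑ k ∈ (Finset.Ico 2 (p + 1)).attach, ((t k.1 k.2 : ℤ_[p]) • B ^ (k.1 : ℕ)) with hD
  have hsplit : ∑ k ∈ Finset.range (p + 1), f k = f 0 + f 1 + ((p : ℤ_[p]) ^ (j + 2)) • D := by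
    rw [Finset.range_eq_Ico, ← Finset.sum_Ico_consecutive _ (by omega : 0 ≤ 2) (by omega : 2 ≤ p + 1),
      htail]
    congr 1
    rw [Finset.sum_Ico_succ_top (by omega), Finset.sum_Ico_succ_top (by omega), Finset.Ico_self,
      Finset.sum_empty, zero_add]
  have hf0 : f 0 = 1 := by simp [hf]
  have hf1 : f 1 = ((p : ℤ_[p]) ^ (j + 1)) • B := by
    rw [hf]
    simp only [pow_one, mul_one, Nat.choose_one_right]
    rw [← nsmul_eq_mul', ← Nat.cast_smul_eq_nsmul (ℤ_[p]), smul_smul, ← pow_succ]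
  refine ⟨B + (p : ℤ_[p]) • D, ⟨g ^ p, ?_, ?_⟩, ?_⟩
  · rw [map_pow, Units.val_pow_eq_pow_val, det_pow, hdet, one_pow]
  · rw [hval, hexp, hsplit, hf0, hf1, smul_add, add_assoc]
    congr 2
    rw [smul_smul, ← pow_succ]
  · rw [map_add]
    have : (p : ℤ_[p]) • D = ((p : ℤ_[p]) ^ 1) • D := by rw [pow_one]
    rw [this, rd_psmul le_rfl, add_zero]
end Part2a
section Part2b
variable {p : ℕ} [Fact p.Prime] {n : ℕ} {G : Type*} [Group G]
  {ρ : G →* Matrix.GeneralLinearGroup (Fin n) ℤ_[p]}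

lemma rd_trace (C : Matrix (Fin n) (Fin n) ℤ_[p]) :
    (rd C).trace = PadicInt.toZMod C.trace := by
  simp [Matrix.trace, Matrix.diag, rd, RingHom.mapMatrix_apply, Matrix.map_apply, map_sum]

lemma rd_trace_zero {j : ℕ} (hj : 1 ≤ j) {C : Matrix (Fin n) (Fin n) ℤ_[p]}
    (h : (1 + ((p : ℤ_[p]) ^ j) • C).det = 1) : (rd C).trace = 0 := by
  have hd := Matrix.det_one_add_smul ((p : ℤ_[p]) ^ j) C
  rw [h] at hd
  set E := Polynomial.eval ((p : ℤ_[p]) ^ j)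
    (Matrix.det (1 + (Polynomial.X : Polynomial ℤ_[p]) • C.map Polynomial.C)).divX.divX with hE
  have hpne : ((p : ℤ_[p]) ^ j) ≠ 0 :=
    pow_ne_zero _ (Nat.cast_ne_zero.mpr (Fact.out : p.Prime).ne_zero)
  have h2 : ((p : ℤ_[p]) ^ j) * (C.trace + E * (p : ℤ_[p]) ^ j) = 0 := by
    linear_combination -hd
  have h3 : C.trace = -(E * (p : ℤ_[p]) ^ j) := by
    rcases mul_eq_zero.mp h2 with h' | h'
    · exact absurd h' hpne
    · exact eq_neg_of_add_eq_zero_left h'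
  rw [rd_trace, h3, map_neg, _root_.map_mul, map_pow, map_natCast, ZMod.natCast_self,
    zero_pow (by omega : j ≠ 0), mul_zero, neg_zero]

lemma tendsto_one_of_shape {a : ℕ → ℕ} (ha : ∀ k, k ≤ a k)
    (D : ℕ → Matrix (Fin n) (Fin n) ℤ_[p]) :
    Filter.Tendsto (fun k => 1 + ((p : ℤ_[p]) ^ (a k)) • D k) Filter.atTop
      (nhds (1 : Matrix (Fin n) (Fin n) ℤ_[p])) := by
  have hp : p.Prime := Fact.out
  set r0 : ℝ := (p : ℝ)⁻¹ with hr0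
  have hr0nn : 0 ≤ r0 := by positivity
  have hr01 : r0 < 1 := by
    rw [hr0, inv_lt_one_iff₀]
    right
    exact_mod_cast hp.one_lt
  have hptend : Filter.Tendsto (fun k => r0 ^ k) Filter.atTop (nhds 0) :=
    tendsto_pow_atTop_nhds_zero_of_lt_one hr0nn hr01
  have key : ∀ (r s : Fin n), Filter.Tendsto
      (fun k => (1 + ((p : ℤ_[p]) ^ (a k)) • D k) r s) Filter.atTop
      (nhds ((1 : Matrix (Fin n) (Fin n) ℤ_[p]) r s)) := by
    intro r s
    rw [tendsto_iff_dist_tendsto_zero]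
    apply squeeze_zero (fun k => dist_nonneg)
    · intro k
      show dist _ _ ≤ r0 ^ k
      rw [dist_eq_norm]
      have h1 : (1 + ((p : ℤ_[p]) ^ (a k)) • D k) r s - (1 : Matrix (Fin n) (Fin n) ℤ_[p]) r s
          = ((p : ℤ_[p]) ^ (a k)) * D k r s := by
        simp [Matrix.add_apply, Matrix.smul_apply, smul_eq_mul]
      rw [h1]
      calc ‖((p : ℤ_[p]) ^ (a k)) * D k r s‖ ≤ ‖((p : ℤ_[p]) ^ (a k))‖ * ‖D k r s‖ :=
            norm_mul_le _ _
      _ ≤ ‖((p : ℤ_[p]) ^ (a k))‖ * 1 := by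
            exact mul_le_mul_of_nonneg_left (PadicInt.norm_le_one _) (norm_nonneg _)
      _ = r0 ^ (a k) := by
            rw [mul_one, PadicInt.norm_p_pow, hr0, _root_.zpow_neg, zpow_natCast, inv_pow]
      _ ≤ r0 ^ k := by
            apply pow_le_pow_of_le_one hr0nn _ (ha k)
            rw [hr0]
            exact inv_le_one_of_one_le₀ (by exact_mod_cast hp.one_lt.le)
    · exact hptend
  exact tendsto_pi_nhds.mpr fun r => tendsto_pi_nhds.mpr fun s => key r s
end Part2b
section Lift
variable {p : ℕ} [Fact p.Prime] {n : ℕ}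

lemma dvd_of_rd_zero {x : ℤ_[p]} (h : PadicInt.toZMod x = 0) : (p : ℤ_[p]) ∣ x := by
  have hx : x ∈ RingHom.ker (PadicInt.toZMod (p := p)) := h
  rwa [PadicInt.ker_toZMod, PadicInt.maximalIdeal_eq_span_p, Ideal.mem_span_singleton] at hx

lemma exists_p_smul {B : Matrix (Fin n) (Fin n) ℤ_[p]} (h : rd B = 0) :
    ∃ D : Matrix (Fin n) (Fin n) ℤ_[p], B = (p : ℤ_[p]) • D := by
  have h' : ∀ i k, ∃ d, B i k = (p : ℤ_[p]) * d := by
    intro i k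
    refine dvd_of_rd_zero ?_
    have := congrFun (congrFun h i) k
    simpa [rd, RingHom.mapMatrix_apply, Matrix.map_apply] using this
  choose D hD using fun i => h' i
  exact ⟨Matrix.of (fun i k => D i k), by ext i k; simpa [Matrix.smul_apply] using hD i k⟩
end Lift

/-- `Φ_i(ρ)`: the set of matrices `A ∈ M_n(𝔽_p)` such that there exist `g ∈ G` and
`B ∈ M_n(ℤ_p)` with `ρ(g) = 1 + p^i·B` and the mod-`p` reduction of `B` equal to `A`. -/
def Phi (p : ℕ) [Fact p.Prime] (n : ℕ) {G : Type*} [Group G]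
    (ρ : G →* Matrix.GeneralLinearGroup (Fin n) ℤ_[p]) (i : ℕ) :
    Set (Matrix (Fin n) (Fin n) (ZMod p)) :=
  {A | ∃ (g : G) (B : Matrix (Fin n) (Fin n) ℤ_[p]),
    (ρ g).val = 1 + ((p : ℤ_[p]) ^ i) • B ∧ B.map PadicInt.toZMod = A}

theorem stmt_12 (p : ℕ) [Fact p.Prime] (hp7 : 7 ≤ p) (n : ℕ) (hn : 2 ≤ n)
    {G : Type*} [Group G] [TopologicalSpace G] [IsTopologicalGroup G]
    [CompactSpace G] [TotallyDisconnectedSpace G] [T2Space G]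
    (ρ : G →* Matrix.GeneralLinearGroup (Fin n) ℤ_[p]) (hρ : Continuous ρ)
    (m : ℕ) (hm : 1 ≤ m)
    -- `μ` is the diagonal matrix whose `(i,i)`-entry (for `1 ≤ i ≤ n`, here indexed by
    -- `Fin n` via `i ↦ i + 1`) equals `1` if `i` is even and `0` if `i` is odd.
    (hμ : Matrix.diagonal (fun i : Fin n =>
        if Even ((i : ℕ) + 1) then (1 : ZMod p) else 0) ∈ Phi p n ρ m)
    (he : ∀ i j : Fin n, i ≠ j → Odd (((i : ℕ) + 1) + ((j : ℕ) + 1)) →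
        Matrix.single i j (1 : ZMod p) ∈ Phi p n ρ m) :
    (∀ A : Matrix (Fin n) (Fin n) (ZMod p), A.trace = 0 → A ∈ Phi p n ρ (4 * m)) ∧
    (∀ u : Matrix.GeneralLinearGroup (Fin n) ℤ_[p],
      u.val.det = 1 →
      (∃ B : Matrix (Fin n) (Fin n) ℤ_[p], u.val = 1 + ((p : ℤ_[p]) ^ (4 * m)) • B) →
      u ∈ Set.range ρ) := by
  -- translate hypotheses
  have hμS : ∃ B ∈ Sset ρ m, rd B = mumat p n := by
    obtain ⟨g, B, hgB, hr⟩ := hμ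
    exact ⟨B, ⟨g, hgB⟩, hr⟩
  have heS : ∀ a b : Fin n, a ≠ b → Odd (((a : ℕ) + 1) + ((b : ℕ) + 1)) →
      ∃ B ∈ Sset ρ m, rd B = Matrix.single a b (1 : ZMod p) := by
    intro a b hab hodd
    obtain ⟨g, B, hgB, hr⟩ := he a b hab hodd
    exact ⟨B, ⟨g, hgB⟩, hr⟩
  -- the key: every trace-zero matrix is realized at every level j ≥ 4m with det-1 witness
  have part1' : ∀ j, 4 * m ≤ j → ∀ A : Matrix (Fin n) (Fin n) (ZMod p), A.trace = 0 →
      ∃ B ∈ Sd ρ j, rd B = A := by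
    intro j hjm
    induction j, hjm using Nat.le_induction with
    | base => exact fun A hA => tracezero_mem hn hm hμS heS A hA
    | succ j hj ih =>
      intro A hA
      obtain ⟨B, hB, hr⟩ := ih A hA
      obtain ⟨B', hB', hr'⟩ := pow_raise hp7 (by omega) hB
      exact ⟨B', hB', by rw [hr', hr]⟩
  constructor
  · intro A hA
    obtain ⟨B, ⟨g, _, hg⟩, hr⟩ := part1' (4 * m) le_rfl A hA
    exact ⟨g, B, hg, hr⟩
  · rintro u hu ⟨B0, hB0⟩
    -- iterative approximation
    have key : ∀ k : ℕ, ∃ (g : G) (C : Matrix (Fin n) (Fin n) ℤ_[p]),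
        u.val = (ρ g).val * (1 + ((p : ℤ_[p]) ^ (4 * m + k)) • C) ∧
        (1 + ((p : ℤ_[p]) ^ (4 * m + k)) • C).det = 1 := by
      intro k
      induction k with
      | zero =>
        refine ⟨1, B0, ?_, ?_⟩
        · rw [_root_.map_one, Units.val_one, one_mul, Nat.add_zero, ← hB0]
        · rw [Nat.add_zero, ← hB0, hu]
      | succ k ih =>
        obtain ⟨g, C, hx, hdx⟩ := ih
        have htr : (rd C).trace = 0 := rd_trace_zero (by omega) hdx
        obtain ⟨B', ⟨h, hdeth, hgh⟩, hr'⟩ := part1' (4 * m + k) (by omega) (rd C) htr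
        have hdiff : rd (C - B') = 0 := by rw [map_sub, hr', sub_self]
        obtain ⟨D, hD⟩ := exists_p_smul hdiff
        have hCBD : C = B' + (p : ℤ_[p]) • D := by
          rw [← hD]; abel
        have hmulinv : (ρ h).val * (((ρ h)⁻¹).val * D) = D := by
          rw [← mul_assoc, ← Units.val_mul, mul_inv_cancel, Units.val_one, one_mul]
        have hxeq : (1 + ((p : ℤ_[p]) ^ (4 * m + k)) • C)
            = (ρ h).val * (1 + ((p : ℤ_[p]) ^ (4 * m + k + 1)) • (((ρ h)⁻¹).val * D)) := by
          rw [mul_add, mul_one, mul_smul_comm, hmulinv, hgh, hCBD]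
          rw [smul_add, smul_smul, ← pow_succ, ← add_assoc]
        have hdet2 : (1 + ((p : ℤ_[p]) ^ (4 * m + k + 1)) • (((ρ h)⁻¹).val * D)).det = 1 := by
          have := hdx
          rw [hxeq, Matrix.det_mul, hdeth, one_mul] at this
          exact this
        refine ⟨g * h, ((ρ h)⁻¹).val * D, ?_, hdet2⟩
        show u.val = (ρ (g * h)).val
          * (1 + ((p : ℤ_[p]) ^ (4 * m + k + 1)) • (((ρ h)⁻¹).val * D))
        rw [_root_.map_mul, Units.val_mul, mul_assoc, ← hxeq, hx]
    choose gs Cs hxs hds using key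
    -- units for the error terms
    have hWu : ∀ k, IsUnit (1 + ((p : ℤ_[p]) ^ (4 * m + k)) • Cs k) := by
      intro k
      rw [Matrix.isUnit_iff_isUnit_det, hds k]
      exact isUnit_one
    set W : ℕ → Matrix.GeneralLinearGroup (Fin n) ℤ_[p] := fun k => (hWu k).unit with hW
    have hWval : ∀ k, (W k).val = 1 + ((p : ℤ_[p]) ^ (4 * m + k)) • Cs k :=
      fun k => (hWu k).unit_spec
    have hueq : ∀ k, ρ (gs k) = u * (W k)⁻¹ := by
      intro k
      have h1 : u = ρ (gs k) * W k := by
        apply Units.ext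
        rw [Units.val_mul, hWval k]
        exact hxs k
      rw [h1, mul_assoc, mul_inv_cancel, mul_one]
    -- convergence of W to 1
    have hval_t : Filter.Tendsto (fun k => (W k).val) Filter.atTop
        (nhds (1 : Matrix (Fin n) (Fin n) ℤ_[p])) := by
      have : (fun k => (W k).val)
          = fun k => 1 + ((p : ℤ_[p]) ^ (4 * m + k)) • Cs k := funext hWval
      rw [this]
      exact tendsto_one_of_shape (fun k => by omega) Cs
    have hinvshape : ∀ k, ((W k)⁻¹).val
        = 1 + ((p : ℤ_[p]) ^ (4 * m + k)) • (-(Cs k * ((W k)⁻¹).val)) := by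
      intro k
      have h1 : (W k).val * ((W k)⁻¹).val = 1 := by
        rw [← Units.val_mul, mul_inv_cancel, Units.val_one]
      rw [hWval k, add_mul, one_mul, smul_mul_assoc] at h1
      rw [smul_neg, eq_add_neg_iff_add_eq]
      exact h1
    have hinv_t : Filter.Tendsto (fun k => ((W k)⁻¹).val) Filter.atTop
        (nhds (1 : Matrix (Fin n) (Fin n) ℤ_[p])) := by
      have : (fun k => ((W k)⁻¹).val)
          = fun k => 1 + ((p : ℤ_[p]) ^ (4 * m + k)) • (-(Cs k * ((W k)⁻¹).val)) :=
        funext hinvshape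
      rw [this]
      exact tendsto_one_of_shape (fun k => by omega) _
    have hW_t : Filter.Tendsto W Filter.atTop (nhds 1) := by
      rw [Units.isEmbedding_embedProduct.tendsto_nhds_iff]
      have hone : Units.embedProduct _ (1 : Matrix.GeneralLinearGroup (Fin n) ℤ_[p])
          = (1, MulOpposite.op 1) := by
        rw [Units.embedProduct_apply, inv_one, Units.val_one]
      rw [hone]
      have hop : Filter.Tendsto (fun k => MulOpposite.op (((W k)⁻¹).val)) Filter.atTop
          (nhds (MulOpposite.op (1 : Matrix (Fin n) (Fin n) ℤ_[p]))) :=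
        (MulOpposite.continuous_op.tendsto _).comp hinv_t
      exact hval_t.prodMk_nhds hop
    have hρ_t : Filter.Tendsto (fun k => ρ (gs k)) Filter.atTop (nhds u) := by
      have hfun : (fun k => ρ (gs k)) = fun k => u * (W k)⁻¹ := funext hueq
      rw [hfun]
      have hinv1 : Filter.Tendsto (fun k => (W k)⁻¹) Filter.atTop (nhds 1) := by
        have := hW_t.inv
        rwa [inv_one] at this
      have := tendsto_const_nhds (x := u) (f := Filter.atTop (α := ℕ)) |>.mul hinv1
      rwa [mul_one] at this
    have hclosed : IsClosed (Set.range ρ) := (isCompact_range hρ).isClosed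
    rw [← hclosed.closure_eq]
    exact mem_closure_of_tendsto hρ_t
      (Filter.Eventually.of_forall fun k => Set.mem_range_self _)
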